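/- Let X be a compact Hausdorff space and f : ℕ → X a map with AE(f) = λ, where 0 ≤ λ < +∞. Let U be an open subset of X and K ⊆ U a closed subset of X. Then there exists a set C ⊆ ℕ with f⁻¹(K) ⊆ C ⊆ f⁻¹(U) such that the characteristic function χ_C : ℕ → ℂ of C satisfies AE(χ_C) ≤ λ. -/

import Mathlib

open Filter Set Topology

namespace Anqie

variable {X : Type*} [TopologicalSpace X]

/-- `𝒰` is an open cover of `X`. -/
def IsOpenCover (𝒰 : Set (Set X)) : Prop :=
  (∀ U ∈ 𝒰, IsOpen U) ∧ ⋃₀ 𝒰 = Set.univ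

/-- The common refinement `𝒰 ∨ T⁻¹ 𝒰 ∨ ⋯ ∨ T^{-(n-1)} 𝒰`. -/
def iterJoin (T : X → X) (𝒰 : Set (Set X)) (n : ℕ) : Set (Set X) :=
  {V | ∃ u : Fin n → Set X, (∀ j, u j ∈ 𝒰) ∧ V = ⋂ j : Fin n, T^[(j : ℕ)] ⁻¹' u j}

/-- The minimal cardinality of a finite subcover of `𝒱` (junk value `0` if none exists). -/
noncomputable def coverNum (𝒱 : Set (Set X)) : ℕ :=
  sInf {k | ∃ F : Finset (Set X), (↑F : Set (Set X)) ⊆ 𝒱 ∧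
    ⋃₀ (↑F : Set (Set X)) = Set.univ ∧ F.card = k}

/-- The Adler–Konheim–McAndrew entropy of `T` relative to the open cover `𝒰`. -/
noncomputable def coverEntropy (T : X → X) (𝒰 : Set (Set X)) : EReal :=
  Filter.atTop.limsup fun n : ℕ =>
    ((Real.log (coverNum (iterJoin T 𝒰 n)) / n : ℝ) : EReal)

/-- The Adler–Konheim–McAndrew topological entropy of `T`, via open covers. -/
noncomputable def entropy (T : X → X) : EReal :=
  ⨆ 𝒰 ∈ {𝒰 : Set (Set X) | IsOpenCover 𝒰}, coverEntropy T 𝒰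

/-- The set of forward-orbit sequences of `f : ℕ → X` inside `X^ℕ`. -/
def orbitSet (f : ℕ → X) : Set (ℕ → X) :=
  {ω | ∃ n : ℕ, ∀ k : ℕ, ω k = f (n + k)}

/-- `X_f`, the closure of the set of orbit sequences in the product topology. -/
def orbitClosure (f : ℕ → X) : Set (ℕ → X) := closure (orbitSet f)

lemma shift_mem_orbitClosure (f : ℕ → X) {ω : ℕ → X} (hω : ω ∈ orbitClosure f) :
    (fun k => ω (k + 1)) ∈ orbitClosure f := by
  have hcont : Continuous fun ω : ℕ → X => fun k => ω (k + 1) :=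
    continuous_pi fun k => continuous_apply (k + 1)
  have hmaps : MapsTo (fun ω : ℕ → X => fun k => ω (k + 1)) (orbitSet f) (orbitSet f) := by
    rintro ω ⟨n, hn⟩
    refine ⟨n + 1, fun k => ?_⟩
    show ω (k + 1) = f (n + 1 + k)
    rw [hn (k + 1)]; congr 1; omega
  exact map_mem_closure hcont hω hmaps

/-- `B_f`, the left shift restricted to `X_f`. -/
def shiftOn (f : ℕ → X) : orbitClosure f → orbitClosure f :=
  fun ω => ⟨fun k => (ω : ℕ → X) (k + 1), shift_mem_orbitClosure f ω.2⟩

/-- The anqie entropy of a map `f : ℕ → X`: the AKM topological entropy of the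
left shift on `X_f`. -/
noncomputable def AE (f : ℕ → X) : EReal := entropy (shiftOn f)

end Anqie
namespace AEProof
open Anqie
open scoped Classical

variable {X : Type*} [TopologicalSpace X]

lemma orbit_pt_mem (f : ℕ → X) (a : ℕ) : (fun j => f (a + j)) ∈ orbitClosure f :=
  subset_closure ⟨a, fun _ => rfl⟩

lemma continuous_shiftOn (f : ℕ → X) : Continuous (shiftOn f) := by
  apply Continuous.subtype_mk
  exact continuous_pi fun k => (continuous_apply (k + 1)).comp continuous_subtype_val

lemma iter_shift (f : ℕ → X) (j : ℕ) (ω : orbitClosure f) (r : ℕ) :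
    (((shiftOn f)^[j]) ω).1 r = ω.1 (r + j) := by
  induction j generalizing ω with
  | zero => rfl
  | succ j ih =>
    rw [Function.iterate_succ_apply, ih (shiftOn f ω)]
    show ω.1 (r + j + 1) = ω.1 (r + (j + 1))
    ring_nf

lemma coverEntropy_le_AE (f : ℕ → X) {𝒰 : Set (Set (orbitClosure f))}
    (h : IsOpenCover 𝒰) : coverEntropy (shiftOn f) 𝒰 ≤ AE f := by
  exact le_iSup₂ (f := fun 𝒰 _ => coverEntropy (shiftOn f) 𝒰) 𝒰 h

lemma iterJoin_isOpenCover {Y : Type*} [TopologicalSpace Y] {T : Y → Y}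
    (hT : Continuous T) {𝒰 : Set (Set Y)} (h : IsOpenCover 𝒰) (n : ℕ) :
    IsOpenCover (iterJoin T 𝒰 n) := by
  constructor
  · rintro V ⟨u, hu, rfl⟩
    exact isOpen_iInter_of_finite fun j => ((h.1 _ (hu j)).preimage (hT.iterate j))
  · rw [Set.eq_univ_iff_forall]
    intro y
    have : ∀ j : Fin n, ∃ u ∈ 𝒰, T^[(j:ℕ)] y ∈ u := by
      intro j
      have : T^[(j:ℕ)] y ∈ ⋃₀ 𝒰 := h.2 ▸ Set.mem_univ _
      simpa [Set.mem_sUnion] using this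
    choose u hu1 hu2 using this
    exact ⟨_, ⟨u, hu1, rfl⟩, Set.mem_iInter.2 fun j => hu2 j⟩

lemma coverNum_realize {Y : Type*} [TopologicalSpace Y] [CompactSpace Y]
    {𝒱 : Set (Set Y)} (h : IsOpenCover 𝒱) :
    ∃ F : Finset (Set Y), (↑F : Set (Set Y)) ⊆ 𝒱 ∧
      ⋃₀ (↑F : Set (Set Y)) = Set.univ ∧ F.card = coverNum 𝒱 := by
  have hcov : (Set.univ : Set Y) ⊆ ⋃ V : 𝒱, (V : Set Y) := by
    intro y _
    have : y ∈ ⋃₀ 𝒱 := h.2 ▸ Set.mem_univ _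
    obtain ⟨V, hV, hy⟩ := this
    exact Set.mem_iUnion.2 ⟨⟨V, hV⟩, hy⟩
  obtain ⟨t, ht⟩ := isCompact_univ.elim_finite_subcover (fun V : 𝒱 => (V : Set Y))
    (fun V => h.1 _ V.2) hcov
  have hne : {k | ∃ F : Finset (Set Y), (↑F : Set (Set Y)) ⊆ 𝒱 ∧
      ⋃₀ (↑F : Set (Set Y)) = Set.univ ∧ F.card = k}.Nonempty := by
    refine ⟨(t.image Subtype.val).card, t.image Subtype.val, ?_, ?_, rfl⟩
    · intro V hV
      simp only [Finset.coe_image, Set.mem_image] at hV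
      obtain ⟨W, _, rfl⟩ := hV; exact W.2
    · apply Set.eq_univ_of_univ_subset
      intro y hy
      obtain ⟨V, hV, hyV⟩ := Set.mem_iUnion₂.1 (ht hy)
      exact ⟨V, by simpa using Finset.mem_image_of_mem Subtype.val hV, hyV⟩
  have := Nat.sInf_mem hne
  obtain ⟨F, h1, h2, h3⟩ := this
  exact ⟨F, h1, h2, h3⟩

lemma coverNum_le {Y : Type*} [TopologicalSpace Y] {𝒱 : Set (Set Y)}
    {F : Finset (Set Y)} (h1 : (↑F : Set (Set Y)) ⊆ 𝒱)
    (h2 : ⋃₀ (↑F : Set (Set Y)) = Set.univ) : coverNum 𝒱 ≤ F.card :=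
  Nat.sInf_le ⟨F, h1, h2, rfl⟩


section Main

variable {X : Type*} [TopologicalSpace X]

/-- The basic "cylinder-like" open sets in the orbit closure determined by a word. -/
def Vset (f : ℕ → X) (U K : Set X) (n : ℕ) (w : ℕ → Bool) : Set (Anqie.orbitClosure f) :=
  {ω | ∀ j < n, if w j then ω.1 j ∈ U else ω.1 j ∉ K}

lemma isOpen_Vset (f : ℕ → X) {U K : Set X} (hU : IsOpen U) (hK : IsClosed K)
    (n : ℕ) (w : ℕ → Bool) : IsOpen (Vset f U K n w) := by
  have : Vset f U K n w = ⋂ j ∈ Finset.range n,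
      {ω : Anqie.orbitClosure f | if w j then ω.1 j ∈ U else ω.1 j ∉ K} := by
    ext ω; simp [Vset]
  rw [this]
  apply isOpen_biInter_finset
  intro j _
  have hco : Continuous fun ω : Anqie.orbitClosure f => ω.1 j :=
    (continuous_apply j).comp continuous_subtype_val
  by_cases h : w j
  · simp only [h, if_true]; exact hU.preimage hco
  · simp only [h, if_false]; exact hK.isOpen_compl.preimage hco

/-- Invariant: `T` is a set of words of length `L` whose cylinders cover `X_f`. -/
def Good (f : ℕ → X) (U K : Set X) (L : ℕ) (T : Finset (ℕ → Bool)) : Prop :=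
  0 < L ∧ ∀ ω : Anqie.orbitClosure f, ∃ w ∈ T, ω ∈ Vset f U K L w

variable [CompactSpace X]

lemma compactSpace_orbitClosure (f : ℕ → X) : CompactSpace (Anqie.orbitClosure f) :=
  isCompact_iff_compactSpace.mp isClosed_closure.isCompact

lemma star (f : ℕ → X) {U K : Set X} (hU : IsOpen U) (hK : IsClosed K)
    {L : ℕ} {T : Finset (ℕ → Bool)} (hgood : Good f U K L T)
    {c : ℝ} (hc : Anqie.AE f < (c : EReal)) :
    ∃ m : ℕ, 0 < m ∧ ∃ T' : Finset (ℕ → Bool),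
      Good f U K (m * L) T' ∧
      ((T'.card : ℝ) ≤ Real.exp (c * (m * L))) ∧
      (∀ w' ∈ T', ∀ i : ℕ, (i + 1) * L ≤ m * L →
        ∃ w ∈ T, ∀ r < L, w' (i * L + r) = w r) := by
  classical
  haveI := compactSpace_orbitClosure f
  obtain ⟨hL, hcov⟩ := hgood
  set Y := Anqie.orbitClosure f
  set σ := Anqie.shiftOn f with hσ
  set 𝒱 : Set (Set Y) := (fun w => Vset f U K L w) '' ↑T with h𝒱
  have hoc : Anqie.IsOpenCover 𝒱 := by
    constructor
    · rintro V ⟨w, _, rfl⟩; exact isOpen_Vset f hU hK L w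
    · apply Set.eq_univ_of_univ_subset
      intro ω _
      obtain ⟨w, hw, hmem⟩ := hcov ω
      exact ⟨Vset f U K L w, ⟨w, hw, rfl⟩, hmem⟩
  have hce : Anqie.coverEntropy σ 𝒱 < (c : EReal) :=
    lt_of_le_of_lt (coverEntropy_le_AE f hoc) hc
  have hev : ∀ᶠ n in atTop,
      ((Real.log (Anqie.coverNum (Anqie.iterJoin σ 𝒱 n)) / n : ℝ) : EReal) < (c : EReal) :=
    Filter.eventually_lt_of_limsup_lt hce
  obtain ⟨n₀, hn₀⟩ := Filter.eventually_atTop.1 hev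
  refine ⟨n₀ + 1, Nat.succ_pos _, ?_⟩
  set m := n₀ + 1
  have hmL : 0 < m * L := Nat.mul_pos (Nat.succ_pos _) hL
  have hn : n₀ ≤ m * L := le_trans (Nat.le_succ _) (Nat.le_mul_of_pos_right m hL)
  have hlog : Real.log (Anqie.coverNum (Anqie.iterJoin σ 𝒱 (m * L))) / (m * L : ℕ) < c := by
    have := hn₀ (m * L) hn
    exact_mod_cast this
  set cn := Anqie.coverNum (Anqie.iterJoin σ 𝒱 (m * L)) with hcn
  have cardbound : (cn : ℝ) ≤ Real.exp (c * (m * L)) := by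
    rcases Nat.eq_zero_or_pos cn with h0 | hpos
    · rw [h0]; exact_mod_cast (Real.exp_pos _).le
    · have hcpos : (0:ℝ) < (cn : ℝ) := by exact_mod_cast hpos
      have hmlpos : (0:ℝ) < ((m * L : ℕ) : ℝ) := by exact_mod_cast hmL
      have : Real.log cn < c * ((m * L : ℕ) : ℝ) := by
        have := (div_lt_iff₀ hmlpos).1 hlog
        linarith
      have := Real.exp_lt_exp.2 this
      rw [Real.exp_log hcpos] at this
      refine le_of_lt (lt_of_lt_of_le this ?_)
      apply le_of_eq; congr 1
      push_cast; ring
  obtain ⟨F₀, hF₀1, hF₀2, hF₀3⟩ :=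
    coverNum_realize (iterJoin_isOpenCover (continuous_shiftOn f) hoc (m * L))
  -- extract words from the elements of F₀
  have hmem : ∀ V ∈ F₀, ∃ u : Fin (m * L) → Set Y,
      (∀ j, u j ∈ 𝒱) ∧ V = ⋂ j : Fin (m * L), σ^[(j : ℕ)] ⁻¹' u j := fun V hV => hF₀1 hV
  choose! u hu1 hu2 using hmem
  have hwH : ∀ V ∈ F₀, ∀ p : ℕ, ∃ wb : ℕ → Bool, ∀ h : p < m * L,
      wb ∈ T ∧ u V ⟨p, h⟩ = Vset f U K L wb := by
    intro V hV p
    by_cases h : p < m * L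
    · obtain ⟨wb, hwb, heq⟩ := hu1 V hV ⟨p, h⟩
      exact ⟨wb, fun _ => ⟨hwb, heq.symm⟩⟩
    · exact ⟨fun _ => false, fun h' => absurd h' h⟩
  choose! wn hwn using hwH
  set word : Set Y → (ℕ → Bool) := fun V p =>
    if h : p < m * L then wn V (p / L * L) (p % L) else false with hword
  refine ⟨F₀.image word, ⟨hmL, ?_⟩, ?_, ?_⟩
  · -- covering
    intro ω
    have : ω ∈ ⋃₀ (↑F₀ : Set (Set Y)) := hF₀2 ▸ Set.mem_univ _
    obtain ⟨V, hV, hωV⟩ := this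
    have hVF : V ∈ F₀ := hV
    refine ⟨word V, Finset.mem_image_of_mem _ hVF, ?_⟩
    intro p hp
    have hdiv : p / L * L < m * L := lt_of_le_of_lt (Nat.div_mul_le_self p L) hp
    have hmm := (hwn V hVF (p / L * L)) hdiv
    have hωu : σ^[p / L * L] ω ∈ u V ⟨p / L * L, hdiv⟩ := by
      have := hu2 V hVF ▸ hωV
      exact Set.mem_iInter.1 this ⟨p / L * L, hdiv⟩
    rw [hmm.2] at hωu
    have hmodL : p % L < L := Nat.mod_lt _ hL
    have := hωu (p % L) hmodL
    have hiter := iter_shift f (p / L * L) ω (p % L)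
    have hpml : p % L + p / L * L = p := Nat.mod_add_div' p L
    rw [hσ] at this
    rw [hiter, hpml] at this
    simp only [word, dif_pos hp]
    exact this
  · -- cardinality
    calc ((F₀.image word).card : ℝ) ≤ (F₀.card : ℝ) := by exact_mod_cast Finset.card_image_le
    _ = (cn : ℝ) := by rw [hF₀3]
    _ ≤ _ := cardbound
  · -- decomposition
    intro w' hw' i hi
    obtain ⟨V, hV, rfl⟩ := Finset.mem_image.1 hw'
    have hiL : i * L < m * L := by
      refine lt_of_lt_of_le ?_ hi
      rw [Nat.succ_mul]; omega
    refine ⟨wn V (i * L), ((hwn V hV (i * L)) hiL).1, ?_⟩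
    intro r hr
    have hplt : i * L + r < m * L := by
      refine lt_of_lt_of_le ?_ hi
      rw [Nat.succ_mul]; omega
    have hcomm : i * L + r = r + i * L := Nat.add_comm _ _
    have hdiv : (i * L + r) / L = i := by
      rw [hcomm, Nat.add_mul_div_right _ _ hL, Nat.div_eq_of_lt hr]; omega
    have hmod : (i * L + r) % L = r := by
      rw [hcomm, Nat.add_mul_mod_self_right, Nat.mod_eq_of_lt hr]
    simp only [word, dif_pos hplt, hdiv, hmod]

end Main

lemma exists_chain {α : Type*} (P : ℕ → α → Prop) (R : ℕ → α → α → Prop)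
    (h0 : ∃ a, P 0 a) (hstep : ∀ k a, P k a → ∃ b, P (k+1) b ∧ R k a b) :
    ∃ g : ℕ → α, (∀ k, P k (g k)) ∧ ∀ k, R k (g k) (g (k+1)) := by
  classical
  let F : ∀ k : ℕ, {a : α // P k a} := fun k =>
    Nat.rec ⟨Classical.choose h0, Classical.choose_spec h0⟩
      (fun k prev => ⟨Classical.choose (hstep k prev.1 prev.2),
        (Classical.choose_spec (hstep k prev.1 prev.2)).1⟩) k
  refine ⟨fun k => (F k).1, fun k => (F k).2, fun k => ?_⟩
  exact (Classical.choose_spec (hstep k (F k).1 (F k).2)).2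

variable {X : Type*} [TopologicalSpace X] [CompactSpace X]

lemma exists_good_chain (f : ℕ → X) {U K : Set X} (hU : IsOpen U) (hK : IsClosed K)
    (hKU : K ⊆ U) {lam : ℝ} (hlam : 0 ≤ lam) (hAE : Anqie.AE f = (lam : EReal)) :
    ∃ (L : ℕ → ℕ) (T : ℕ → Finset (ℕ → Bool)),
      (∀ k, Good f U K (L k) (T k)) ∧
      (∀ k, ((T k).card : ℝ) ≤ Real.exp ((lam + 1/(k+1)) * L k)) ∧
      (∀ k, ∃ m, 0 < m ∧ L (k+1) = m * L k) ∧
      (∀ k, ∀ w' ∈ T (k+1), ∀ i : ℕ, (i+1) * L k ≤ L (k+1) →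
        ∃ w ∈ T k, ∀ r < L k, w' (i * L k + r) = w r) := by
  classical
  set P : ℕ → ℕ × Finset (ℕ → Bool) → Prop := fun k a =>
    Good f U K a.1 a.2 ∧ ((a.2.card : ℝ) ≤ Real.exp ((lam + 1/(k+1)) * a.1))
  set R : ℕ → ℕ × Finset (ℕ → Bool) → ℕ × Finset (ℕ → Bool) → Prop := fun _ a b =>
    (∃ m, 0 < m ∧ b.1 = m * a.1) ∧
    (∀ w' ∈ b.2, ∀ i : ℕ, (i+1) * a.1 ≤ b.1 →
      ∃ w ∈ a.2, ∀ r < a.1, w' (i * a.1 + r) = w r)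
  have h0 : ∃ a, P 0 a := by
    refine ⟨(1, {fun _ => false, fun _ => true}), ⟨⟨Nat.one_pos, ?_⟩, ?_⟩⟩
    · intro ω
      by_cases h : ω.1 0 ∈ U
      · refine ⟨fun _ => true, by simp, ?_⟩
        intro j hj
        interval_cases j
        simpa using h
      · refine ⟨fun _ => false, by simp, ?_⟩
        intro j hj
        interval_cases j
        simpa using fun hk => h (hKU hk)
    · have h2 : ({fun _ => false, fun _ => true} : Finset (ℕ → Bool)).card ≤ 2 := by
        apply le_trans (Finset.card_insert_le _ _); simp
      calc (({fun _ => false, fun _ => true} : Finset (ℕ → Bool)).card : ℝ) ≤ 2 := by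
            exact_mod_cast h2
      _ ≤ Real.exp 1 := by
            have := Real.exp_one_gt_d9; linarith
      _ ≤ Real.exp ((lam + 1/(0+1)) * 1) := by
            apply Real.exp_le_exp.2; norm_num; linarith
      _ ≤ _ := by norm_num
  have hstep : ∀ k a, P k a → ∃ b, P (k+1) b ∧ R k a b := by
    rintro k ⟨L, T⟩ ⟨hgood, _⟩
    have hc : Anqie.AE f < (((lam + 1/(k+2)) : ℝ) : EReal) := by
      rw [hAE]
      have : lam < lam + 1/((k:ℝ)+2) := by
        have : (0:ℝ) < 1/((k:ℝ)+2) := by positivity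
        linarith
      exact_mod_cast this
    obtain ⟨m, hm, T', hgood', hcard', hD'⟩ := star f hU hK hgood hc
    refine ⟨(m * L, T'), ⟨hgood', ?_⟩, ⟨m, hm, rfl⟩, hD'⟩
    have : ((k:ℝ) + 1 + 1) = (k:ℝ) + 2 := by ring
    calc ((T'.card : ℝ)) ≤ Real.exp ((lam + 1/(k+2)) * (m * L)) := hcard'
    _ = Real.exp ((lam + 1/((k+1:ℕ)+1)) * ((m*L : ℕ))) := by push_cast; ring_nf
  obtain ⟨g, hg1, hg2⟩ := exists_chain P R h0 hstep
  exact ⟨fun k => (g k).1, fun k => (g k).2, fun k => (hg1 k).1, fun k => (hg1 k).2,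
    fun k => (hg2 k).1, fun k => (hg2 k).2⟩

lemma mult_le {a b c : ℕ} (hc : 0 < c) (ha : c ∣ a) (hb : c ∣ b) (h : a < b) :
    a + c ≤ b := by
  obtain ⟨x, rfl⟩ := ha
  obtain ⟨y, rfl⟩ := hb
  have hxy : x < y := by
    by_contra hxy
    push_neg at hxy
    have : c * y ≤ c * x := Nat.mul_le_mul_left c hxy
    omega
  calc c * x + c = c * (x + 1) := by ring
  _ ≤ c * y := Nat.mul_le_mul_left c hxy

lemma exists_t (f : ℕ → X) {U K : Set X} (hU : IsOpen U) (hK : IsClosed K)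
    (hKU : K ⊆ U) {lam : ℝ} (hlam : 0 ≤ lam) (hAE : Anqie.AE f = (lam : EReal)) :
    ∃ t : ℕ → Bool,
      (∀ n, (t n = true → f n ∈ U) ∧ (t n = false → f n ∉ K)) ∧
      ∀ δ : ℝ, 0 < δ → ∃ (M L : ℕ) (S : Finset (ℕ → Bool)),
        0 < L ∧ S.Nonempty ∧ ((S.card : ℝ) ≤ Real.exp ((lam + δ) * L)) ∧
        ∀ i : ℕ, ∃ w ∈ S, ∀ r < L, t (M + i * L + r) = w r := by
  classical
  obtain ⟨L, T, hgood, hcard, hmul, hD⟩ := exists_good_chain f hU hK hKU hlam hAE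
  have hLpos : ∀ k, 0 < L k := fun k => (hgood k).1
  have hdvd : ∀ k j, k ≤ j → L k ∣ L j := by
    intro k j hkj
    induction j, hkj using Nat.le_induction with
    | base => exact dvd_rfl
    | succ j hkj ih =>
      obtain ⟨m, _, heq⟩ := hmul j
      exact heq ▸ Dvd.dvd.mul_left ih m
  set M : ℕ → ℕ := fun k => (Finset.range k).sum L with hM
  have hM0 : M 0 = 0 := by simp [hM]
  have hMsucc : ∀ k, M (k+1) = M k + L k := by
    intro k; simp [hM, Finset.sum_range_succ]
  have hMmono : ∀ k j, k ≤ j → M k ≤ M j := by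
    intro k j hkj
    induction j, hkj using Nat.le_induction with
    | base => exact le_rfl
    | succ j hkj ih => rw [hMsucc]; omega
  have hkM : ∀ k, k ≤ M k := by
    intro k
    induction k with
    | zero => omega
    | succ k ih => rw [hMsucc]; have := hLpos k; omega
  have hMdvd : ∀ k j, k ≤ j → L k ∣ (M j - M k) := by
    intro k j hkj
    induction j, hkj using Nat.le_induction with
    | base => simp
    | succ j hkj ih =>
      have h1 : M k ≤ M j := hMmono k j hkj
      have h2 : M (j+1) - M k = (M j - M k) + L j := by rw [hMsucc]; omega
      rw [h2]
      exact dvd_add ih (hdvd k j hkj)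
  set Kf : ℕ → ℕ := fun n => Nat.findGreatest (fun k => M k ≤ n) n with hKf
  have hK1 : ∀ n, M (Kf n) ≤ n := by
    intro n
    exact Nat.findGreatest_spec (P := fun k => M k ≤ n) (Nat.zero_le n)
      (show M 0 ≤ n by rw [hM0]; omega)
  have hK2 : ∀ n, n < M (Kf n + 1) := by
    intro n
    by_contra h
    push_neg at h
    have h1 : Kf n + 1 ≤ n := le_trans (hkM _) h
    have h2 : Kf n + 1 ≤ Kf n := Nat.le_findGreatest (P := fun k => M k ≤ n) h1 h
    omega
  have hKuniq : ∀ k x, M k ≤ x → x < M (k+1) → Kf x = k := by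
    intro k x h1 h2
    have ha : k ≤ Kf x := Nat.le_findGreatest (P := fun j => M j ≤ x) (le_trans (hkM k) h1) h1
    have hb : Kf x ≤ k := by
      by_contra h
      push_neg at h
      have := hK1 x
      have := hMmono (k+1) (Kf x) h
      omega
    omega
  have hwv : ∀ k, ∃ w ∈ T k,
      (⟨fun j => f (M k + j), orbit_pt_mem f (M k)⟩ : Anqie.orbitClosure f)
        ∈ Vset f U K (L k) w := fun k => (hgood k).2 _
  choose w hw1 hw2 using hwv
  have hwval : ∀ k j, j < L k →
      (if w k j then f (M k + j) ∈ U else f (M k + j) ∉ K) := by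
    intro k j hj
    exact hw2 k j hj
  set t : ℕ → Bool := fun n => w (Kf n) (n - M (Kf n)) with ht
  -- chain decomposition lemma
  have DD : ∀ k k', k ≤ k' → ∀ w' ∈ T k', ∀ d, L k ∣ d → d + L k ≤ L k' →
      ∃ w'' ∈ T k, ∀ r < L k, w' (d + r) = w'' r := by
    intro k k' hkk'
    induction k', hkk' using Nat.le_induction with
    | base =>
      intro w' hw' d hd hfit
      have hd0 : d = 0 := by have := hLpos k; omega
      subst hd0
      exact ⟨w', hw', fun r _ => by rw [Nat.zero_add]⟩
    | succ k' hk ih =>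
      intro w' hw' d hd hfit
      have hLL : L k ∣ L k' := hdvd k k' hk
      have hLL' : L k' ∣ L (k'+1) := hdvd k' (k'+1) (Nat.le_succ _)
      have hmoddiv := Nat.mod_add_div d (L k')
      have h1 : (d / L k' + 1) * L k' ≤ L (k'+1) := by
        have hiL : L k' * (d / L k') < L (k'+1) := by
          have := hLpos k
          omega
        have h2 := mult_le (hLpos k') (dvd_mul_right (L k') (d / L k')) hLL' hiL
        calc (d / L k' + 1) * L k' = L k' * (d / L k') + L k' := by ring
        _ ≤ L (k'+1) := h2
      obtain ⟨wmid, hwmid, hmatch⟩ := hD k' w' hw' (d / L k') h1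
      have hd' : L k ∣ d % L k' := by
        have h2 : d % L k' = d - L k' * (d / L k') := by omega
        rw [h2]
        exact Nat.dvd_sub hd (Dvd.dvd.mul_right hLL _)
      have hfit' : d % L k' + L k ≤ L k' := by
        have hmlt : d % L k' < L k' := Nat.mod_lt _ (hLpos k')
        exact mult_le (hLpos k) hd' hLL hmlt
      obtain ⟨w'', hw'', hmatch2⟩ := ih wmid hwmid (d % L k') hd' hfit'
      refine ⟨w'', hw'', fun r hr => ?_⟩
      have heq1 : w' (d + r) = wmid (d % L k' + r) := by
        have h3 := hmatch (d % L k' + r) (by omega)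
        have h4 : d / L k' * L k' + (d % L k' + r) = d + r := by
          have hc : d / L k' * L k' = L k' * (d / L k') := Nat.mul_comm _ _
          omega
        rw [← h4, h3]
      rw [heq1, hmatch2 r hr]
  -- block property
  have hblock : ∀ k i : ℕ, ∃ wS ∈ T k, ∀ r < L k, t (M k + i * L k + r) = wS r := by
    intro k i
    set p := M k + i * L k with hp
    set k' := Kf p with hk'
    have hkk' : k ≤ k' := Nat.le_findGreatest (P := fun j => M j ≤ p)
      (le_trans (hkM k) (Nat.le_add_right _ _)) (Nat.le_add_right _ _)
    have h1 : M k' ≤ p := hK1 p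
    have h2 : p < M k' + L k' := by have := hK2 p; rw [hMsucc] at this; exact this
    have hMk : M k ≤ M k' := hMmono k k' hkk'
    have hd : L k ∣ (p - M k') := by
      have ha : L k ∣ p - M k := by
        have : p - M k = i * L k := by omega
        rw [this]; exact dvd_mul_left (L k) i
      have hb := hMdvd k k' hkk'
      have : p - M k' = (p - M k) - (M k' - M k) := by omega
      rw [this]
      exact Nat.dvd_sub ha hb
    have hfit : (p - M k') + L k ≤ L k' := by
      apply mult_le (hLpos k) hd (hdvd k k' hkk')
      omega
    have hreg : ∀ r, r < L k → Kf (p + r) = k' := by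
      intro r hr
      apply hKuniq
      · omega
      · rw [hMsucc]; omega
    obtain ⟨w'', hw'', hmatch⟩ := DD k k' hkk' (w k') (hw1 k') (p - M k') hd hfit
    refine ⟨w'', hw'', fun r hr => ?_⟩
    have : t (p + r) = w k' (p - M k' + r) := by
      rw [ht]
      simp only []
      rw [hreg r hr]
      congr 1
      omega
    rw [this, hmatch r hr]
  refine ⟨t, ?_, ?_⟩
  · -- validity
    intro n
    set k := Kf n with hk
    have h1 : M k ≤ n := hK1 n
    have h2 : n < M k + L k := by have := hK2 n; rw [hMsucc] at this; exact this
    have hj : n - M k < L k := by omega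
    have := hwval k (n - M k) hj
    have hnk : M k + (n - M k) = n := by omega
    rw [hnk] at this
    constructor
    · intro htt
      rw [ht] at htt
      simp only [] at htt
      rw [htt] at this
      simpa using this
    · intro htf
      rw [ht] at htf
      simp only [] at htf
      rw [htf] at this
      simpa using this
  · -- complexity certificates
    intro δ hδ
    obtain ⟨k, hkδ⟩ : ∃ k : ℕ, 1/((k:ℝ)+1) ≤ δ := by
      obtain ⟨k, hkgt⟩ := exists_nat_gt (1/δ)
      refine ⟨k, ?_⟩
      rw [div_le_iff₀ (by positivity)]
      rw [div_lt_iff₀ hδ] at hkgt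
      nlinarith
    refine ⟨M k, L k, T k, hLpos k, ?_, ?_, fun i => hblock k i⟩
    · obtain ⟨wS, hwS, _⟩ := hblock k 0
      exact ⟨wS, hwS⟩
    · refine le_trans (hcard k) (Real.exp_le_exp.2 ?_)
      have : (0:ℝ) ≤ (L k : ℝ) := Nat.cast_nonneg _
      have h5 : 1/((k:ℝ)+1) ≤ δ := hkδ
      nlinarith

lemma window_count (t : ℕ → Bool) {M L : ℕ} {S : Finset (ℕ → Bool)} (hL : 0 < L)
    (hblock : ∀ i : ℕ, ∃ w ∈ S, ∀ r < L, t (M + i * L + r) = w r) (n : ℕ) :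
    ∃ G : Finset (ℕ → Bool),
      (∀ m : ℕ, (fun j => if j < n then t (m + j) else false) ∈ G) ∧
      G.card ≤ (M + 1) + L * S.card ^ (n / L + 2) := by
  classical
  -- aligned windows
  have AW : ∀ z : ℕ, ∃ A : Finset (ℕ → Bool), A.card ≤ S.card ^ z ∧
      ∀ i : ℕ, (fun j => if j < z * L then t (M + i * L + j) else false) ∈ A := by
    intro z
    induction z with
    | zero =>
      refine ⟨{fun _ => false}, by simp, fun i => ?_⟩
      simp only [Nat.zero_mul]
      convert Finset.mem_singleton_self _ using 2
      simp
    | succ z ih =>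
      obtain ⟨A, hA1, hA2⟩ := ih
      refine ⟨Finset.image₂ (fun w rest => fun j : ℕ =>
        if j < L then w j else rest (j - L)) S A, ?_, ?_⟩
      · calc (Finset.image₂ _ S A).card ≤ S.card * A.card := Finset.card_image₂_le _ _ _
        _ ≤ S.card * S.card ^ z := Nat.mul_le_mul_left _ hA1
        _ = S.card ^ (z + 1) := (pow_succ' _ _).symm
      · intro i
        obtain ⟨w, hw, hwin⟩ := hblock i
        refine Finset.mem_image₂.2 ⟨w, hw,
          (fun j => if j < z * L then t (M + (i + 1) * L + j) else false), hA2 (i + 1), ?_⟩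
        funext j
        by_cases hj : j < L
        · have hjz : j < (z + 1) * L := by
            have : (z + 1) * L = z * L + L := by ring
            omega
          simp only [if_pos hj, if_pos hjz]
          exact (hwin j hj).symm
        · simp only [if_neg hj]
          have harith : (z + 1) * L = z * L + L := by ring
          have hidx : M + (i + 1) * L + (j - L) = M + i * L + j ∨ True := Or.inr trivial
          by_cases hjz : j < (z + 1) * L
          · have h1 : j - L < z * L := by omega
            simp only [if_pos hjz, if_pos h1]
            congr 1
            have : (i + 1) * L = i * L + L := by ring
            omega
          · have h1 : ¬ (j - L < z * L) := by omega
            simp only [if_neg hjz, if_neg h1]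
  obtain ⟨A, hA1, hA2⟩ := AW (n / L + 2)
  refine ⟨(Finset.range (M + 1)).image (fun m => fun j => if j < n then t (m + j) else false)
    ∪ Finset.image₂ (fun o aw => fun j : ℕ => if j < n then aw (o + j) else false)
      (Finset.range L) A, ?_, ?_⟩
  · intro m
    by_cases hm : m < M + 1
    · exact Finset.mem_union_left _
        (Finset.mem_image_of_mem _ (Finset.mem_range.2 hm))
    · push_neg at hm
      set q := m - M with hq
      have hqm : m = M + q := by omega
      have ho : q % L < L := Nat.mod_lt _ hL
      apply Finset.mem_union_right
      refine Finset.mem_image₂.2 ⟨q % L, Finset.mem_range.2 ho,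
        (fun j => if j < (n / L + 2) * L then t (M + (q / L) * L + j) else false),
        hA2 (q / L), ?_⟩
      funext j
      by_cases hj : j < n
      · simp only [if_pos hj]
        have hdm : L * (q / L) + q % L = q := Nat.div_add_mod q L
        have hnL : n < (n / L) * L + L := by
          have h1 : L * (n / L) + n % L = n := Nat.div_add_mod n L
          have h2 : n % L < L := Nat.mod_lt _ hL
          have h3 : (n / L) * L = L * (n / L) := Nat.mul_comm _ _
          omega
        have hoj : q % L + j < (n / L + 2) * L := by
          have h4 : (n / L + 2) * L = (n / L) * L + L + L := by ring
          omega
        rw [if_pos hoj]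
        congr 1
        have h5 : (q / L) * L = L * (q / L) := Nat.mul_comm _ _
        omega
      · simp only [if_neg hj]
  · calc _ ≤ ((Finset.range (M + 1)).image
        (fun m => fun j => if j < n then t (m + j) else false)).card
        + (Finset.image₂ (fun o aw => fun j : ℕ => if j < n then aw (o + j) else false)
          (Finset.range L) A).card := Finset.card_union_le _ _
    _ ≤ (M + 1) + L * S.card ^ (n / L + 2) := by
        gcongr
        · calc _ ≤ (Finset.range (M + 1)).card := Finset.card_image_le
          _ = M + 1 := Finset.card_range _
        · calc _ ≤ (Finset.range L).card * A.card := Finset.card_image₂_le _ _ _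
          _ ≤ L * S.card ^ (n / L + 2) := by
              rw [Finset.card_range]
              exact Nat.mul_le_mul_left _ hA1

/-- `Bool` into `ℂ`. -/
def boolC (b : Bool) : ℂ := if b then 1 else 0

lemma boolC_mem (b : Bool) : boolC b ∈ ({0, 1} : Set ℂ) := by
  cases b <;> simp [boolC]

lemma eq_of_close01 {a b : ℂ} (ha : a ∈ ({0, 1} : Set ℂ)) (hb : b ∈ ({0, 1} : Set ℂ))
    (h : dist a b < 1/2) : a = b := by
  rcases ha with ha | ha <;> rcases hb with hb | hb <;> subst ha <;> subst hb <;>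
    first
      | rfl
      | (exfalso
         rw [dist_eq_norm] at h
         simp only [zero_sub, sub_zero, norm_neg, norm_one] at h
         norm_num at h)

lemma coords01 (t : ℕ → Bool) (ω : Anqie.orbitClosure (fun n => boolC (t n))) (j : ℕ) :
    ω.1 j ∈ ({0, 1} : Set ℂ) := by
  have hcl : IsClosed ({0, 1} : Set ℂ) :=
    (Set.finite_singleton (1:ℂ)).insert 0 |>.isClosed
  have := map_mem_closure (continuous_apply j) ω.2
    (fun ψ hψ => by
      obtain ⟨m, hm⟩ := hψ
      rw [hm j]
      exact boolC_mem _)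
  rwa [hcl.closure_eq] at this

lemma window_approx (t : ℕ → Bool) (ω : Anqie.orbitClosure (fun n => boolC (t n))) (n : ℕ) :
    ∃ m : ℕ, ∀ j < n, ω.1 j = boolC (t (m + j)) := by
  have hopen : IsOpen {ψ : ℕ → ℂ | ∀ j ∈ Finset.range n, ψ j ∈ Metric.ball (ω.1 j) (1/2)} := by
    have : {ψ : ℕ → ℂ | ∀ j ∈ Finset.range n, ψ j ∈ Metric.ball (ω.1 j) (1/2)} =
        ⋂ j ∈ Finset.range n, (fun ψ : ℕ → ℂ => ψ j) ⁻¹' Metric.ball (ω.1 j) (1/2) := by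
      ext ψ; simp
    rw [this]
    exact isOpen_biInter_finset fun j _ => (continuous_apply j).isOpen_preimage _ Metric.isOpen_ball
  have hmem : ω.1 ∈ {ψ : ℕ → ℂ | ∀ j ∈ Finset.range n, ψ j ∈ Metric.ball (ω.1 j) (1/2)} := by
    intro j _; simp [Metric.mem_ball]
  obtain ⟨ψ, hψO, hψorb⟩ := mem_closure_iff.1 ω.2 _ hopen hmem
  obtain ⟨m, hm⟩ := hψorb
  refine ⟨m, fun j hj => ?_⟩
  have h1 : dist (ψ j) (ω.1 j) < 1/2 := hψO j (Finset.mem_range.2 hj)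
  rw [hm j] at h1
  exact eq_of_close01 (coords01 t ω j) (boolC_mem _) (by rwa [dist_comm])

lemma compactZ (t : ℕ → Bool) : CompactSpace (Anqie.orbitClosure (fun n => boolC (t n))) := by
  rw [← isCompact_iff_compactSpace]
  apply IsCompact.of_isClosed_subset (isCompact_univ_pi (fun _ : ℕ =>
    ((Set.finite_singleton (1:ℂ)).insert 0).isCompact)) isClosed_closure
  have hsub : Anqie.orbitSet (fun n => boolC (t n)) ⊆ Set.pi Set.univ (fun _ : ℕ => ({0,1} : Set ℂ)) := by
    rintro ψ ⟨m, hm⟩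
    intro j _
    rw [hm j]
    exact boolC_mem _
  have hcl : IsClosed (Set.pi Set.univ (fun _ : ℕ => ({0,1} : Set ℂ))) :=
    isClosed_set_pi fun j _ => (Set.finite_singleton (1:ℂ)).insert 0 |>.isClosed
  exact closure_minimal hsub hcl

lemma cylinder_lemma (t : ℕ → Bool) {𝒰 : Set (Set (Anqie.orbitClosure (fun n => boolC (t n))))}
    (h𝒰 : Anqie.IsOpenCover 𝒰) :
    ∃ ℓ : ℕ, ∀ z : Anqie.orbitClosure (fun n => boolC (t n)), ∃ O ∈ 𝒰,
      ∀ z' : Anqie.orbitClosure (fun n => boolC (t n)),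
        (∀ j < ℓ, z'.1 j = z.1 j) → z' ∈ O := by
  classical
  haveI := compactZ t
  let Z := Anqie.orbitClosure (fun n => boolC (t n))
  have step1 : ∀ z : Z, ∃ (ℓz : ℕ) (O : Set Z), O ∈ 𝒰 ∧
      ∀ z' : Z, (∀ j < ℓz, z'.1 j = z.1 j) → z' ∈ O := by
    intro z
    have : z ∈ ⋃₀ 𝒰 := h𝒰.2 ▸ Set.mem_univ _
    obtain ⟨O, hO, hzO⟩ := this
    obtain ⟨O', hO', hOeq⟩ := isOpen_induced_iff.1 (h𝒰.1 O hO)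
    have hzO' : z.1 ∈ O' := by rw [← hOeq] at hzO; exact hzO
    obtain ⟨I, u, hu, hsub⟩ := isOpen_pi_iff.1 hO' z.1 hzO'
    refine ⟨I.sup id + 1, O, hO, fun z' hz' => ?_⟩
    have : z'.1 ∈ O' := by
      apply hsub
      intro a ha
      have hlt : a < I.sup id + 1 := Nat.lt_succ_of_le (Finset.le_sup (f := id) ha)
      rw [hz' a hlt]
      exact (hu a ha).2
    rw [← hOeq]
    exact this
  choose ℓf Of hOf1 hOf2 using step1
  -- cylinders are open
  have hcylopen : ∀ z : Z, IsOpen {z' : Z | ∀ j < ℓf z, z'.1 j = z.1 j} := by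
    intro z
    have heq : {z' : Z | ∀ j < ℓf z, z'.1 j = z.1 j} =
        ⋂ j ∈ Finset.range (ℓf z),
          (fun z' : Z => z'.1 j) ⁻¹' Metric.ball (z.1 j) (1/2) := by
      ext z'
      simp only [Set.mem_setOf_eq, Set.mem_iInter, Set.mem_preimage, Metric.mem_ball,
        Finset.mem_range]
      constructor
      · intro h j hj; rw [h j hj]; simp
      · intro h j hj
        exact eq_of_close01 (coords01 t z' j) (coords01 t z j) (h j hj)
    rw [heq]
    exact isOpen_biInter_finset fun j _ =>
      ((continuous_apply j).comp continuous_subtype_val).isOpen_preimage _ Metric.isOpen_ball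
  obtain ⟨zs, hzs⟩ := isCompact_univ.elim_finite_subcover
    (fun z : Z => {z' : Z | ∀ j < ℓf z, z'.1 j = z.1 j}) hcylopen
    (fun z _ => Set.mem_iUnion.2 ⟨z, fun j _ => rfl⟩)
  refine ⟨zs.sup ℓf, fun z => ?_⟩
  obtain ⟨z₀, hz₀, hzcyl⟩ := Set.mem_iUnion₂.1 (hzs (Set.mem_univ z))
  refine ⟨Of z₀, hOf1 z₀, fun z' hz' => ?_⟩
  apply hOf2 z₀
  intro j hj
  have hjl : j < zs.sup ℓf := lt_of_lt_of_le hj (Finset.le_sup hz₀)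
  rw [hz' j hjl]
  exact hzcyl j hj

lemma AE_le_of_cert (t : ℕ → Bool) {lam : ℝ} (hlam : 0 ≤ lam)
    (hcert : ∀ δ : ℝ, 0 < δ → ∃ (M L : ℕ) (S : Finset (ℕ → Bool)),
      0 < L ∧ S.Nonempty ∧ ((S.card : ℝ) ≤ Real.exp ((lam + δ) * L)) ∧
      ∀ i : ℕ, ∃ w ∈ S, ∀ r < L, t (M + i * L + r) = w r) :
    Anqie.AE (fun n => boolC (t n)) ≤ (lam : EReal) := by
  classical
  apply iSup₂_le
  intro 𝒰 h𝒰
  set σ := Anqie.shiftOn (fun n => boolC (t n)) with hσ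
  have main : ∀ δ : ℝ, 0 < δ →
      Anqie.coverEntropy σ 𝒰 ≤ ((lam + δ : ℝ) : EReal) := by
    intro δ hδ
    obtain ⟨ℓ, hℓ⟩ := cylinder_lemma t h𝒰
    choose Of hOf1 hOf2 using hℓ
    obtain ⟨M, L, S, hL, hSne, hScard, hblock⟩ := hcert δ hδ
    have hGex := fun n => window_count t hL hblock (n + ℓ)
    choose G hG1 hG2 using hGex
    obtain ⟨Oj, hOj⟩ : ∃ O, O ∈ 𝒰 := by
      have hz : (⟨_, orbit_pt_mem (fun n => boolC (t n)) 0⟩ :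
        Anqie.orbitClosure (fun n => boolC (t n))) ∈ ⋃₀ 𝒰 := h𝒰.2 ▸ Set.mem_univ _
      obtain ⟨O, hO, _⟩ := hz
      exact ⟨O, hO⟩
    set Pick : (ℕ → Bool) → ℕ → Set (Anqie.orbitClosure (fun n => boolC (t n))) := fun w j =>
      if h : ∃ z : Anqie.orbitClosure (fun n => boolC (t n)),
          ∀ r < ℓ, z.1 r = boolC (w (j + r))
      then Of h.choose else Oj with hPick
    have hPickU : ∀ w j, Pick w j ∈ 𝒰 := by
      intro w j
      rw [hPick]
      dsimp only
      split
      · exact hOf1 _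
      · exact hOj
    have hcn : ∀ n, Anqie.coverNum (Anqie.iterJoin σ 𝒰 n) ≤
        (M + 1) + L * S.card ^ ((n + ℓ) / L + 2) := by
      intro n
      set F : Finset (Set (Anqie.orbitClosure (fun k => boolC (t k)))) :=
        (G n).image (fun w => ⋂ j : Fin n, σ^[(j:ℕ)] ⁻¹' Pick w j) with hF
      have hsub : (↑F : Set (Set (Anqie.orbitClosure (fun k => boolC (t k))))) ⊆
          Anqie.iterJoin σ 𝒰 n := by
        rw [hF]
        intro V hV
        simp only [Finset.coe_image, Set.mem_image] at hV
        obtain ⟨w, _, rfl⟩ := hV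
        exact ⟨fun j => Pick w (j:ℕ), fun j => hPickU w _, rfl⟩
      have hcov : ⋃₀ (↑F : Set (Set (Anqie.orbitClosure (fun k => boolC (t k))))) =
          Set.univ := by
        rw [hF]
        apply Set.eq_univ_of_univ_subset
        intro z _
        obtain ⟨m, hm⟩ := window_approx t z (n + ℓ)
        refine ⟨_, Finset.mem_coe.2 (Finset.mem_image_of_mem _ (hG1 n m)), ?_⟩
        rw [Set.mem_iInter]
        intro j
        rw [Set.mem_preimage]
        have hz : ∀ r < ℓ, (σ^[(j:ℕ)] z).1 r =
            boolC ((fun jj => if jj < n + ℓ then t (m + jj) else false) ((j:ℕ) + r)) := by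
          intro r hr
          rw [iter_shift]
          have h1 : r + (j:ℕ) < n + ℓ := by have := j.2; omega
          rw [hm (r + (j:ℕ)) h1]
          have h2 : (j:ℕ) + r < n + ℓ := by omega
          simp only [if_pos h2]
          exact congrArg (fun x => boolC (t x)) (by omega)
        rw [hPick]
        dsimp only
        rw [dif_pos ⟨σ^[(j:ℕ)] z, hz⟩]
        set hwit : ∃ zz : Anqie.orbitClosure (fun n => boolC (t n)),
            ∀ r < ℓ, zz.1 r = boolC ((fun jj => if jj < n + ℓ then t (m + jj) else false)
              ((j:ℕ) + r)) := ⟨σ^[(j:ℕ)] z, hz⟩ with hwitdef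
        apply hOf2
        intro r hr
        rw [hz r hr, (hwit.choose_spec r hr)]
      calc Anqie.coverNum (Anqie.iterJoin σ 𝒰 n) ≤ F.card := coverNum_le hsub hcov
      _ ≤ (G n).card := by rw [hF]; exact Finset.card_image_le
      _ ≤ (M + 1) + L * S.card ^ ((n + ℓ) / L + 2) := hG2 n
    -- analysis
    set s : ℝ := (S.card : ℝ) with hs
    have hs1 : (1:ℝ) ≤ s := by
      have h : (1:ℕ) ≤ S.card := Finset.card_pos.2 hSne
      rw [hs]
      exact_mod_cast h
    have hspos : (0:ℝ) < s := lt_of_lt_of_le one_pos hs1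
    set c : ℝ := lam + δ with hcdef
    have hc0 : 0 < c := by positivity
    have hlogs : Real.log s ≤ c * L := by
      have h1 := Real.log_le_log hspos hScard
      rwa [Real.log_exp] at h1
    set R : ℝ := (M + 1 : ℝ) + L * s ^ (ℓ / L + 3) with hR
    have hR1 : (1:ℝ) ≤ R := by
      have h1 : (0:ℝ) ≤ (L:ℝ) * s ^ (ℓ / L + 3) := by positivity
      have h2 : (1:ℝ) ≤ (M:ℝ) + 1 := by
        have : (0:ℝ) ≤ (M:ℝ) := Nat.cast_nonneg _
        linarith
      rw [hR]; linarith
    have hRpos : (0:ℝ) < R := lt_of_lt_of_le one_pos hR1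
    have hkey : ∀ n : ℕ, Real.log (Anqie.coverNum (Anqie.iterJoin σ 𝒰 n)) ≤
        Real.log R + c * n := by
      intro n
      have hBn : ((Anqie.coverNum (Anqie.iterJoin σ 𝒰 n) : ℝ)) ≤ R * s ^ (n / L) := by
        have h1 : (Anqie.coverNum (Anqie.iterJoin σ 𝒰 n) : ℝ) ≤
            (M + 1 : ℝ) + L * s ^ ((n + ℓ) / L + 2) := by
          rw [hs]
          exact_mod_cast hcn n
        have hexp : (n + ℓ) / L + 2 ≤ n / L + (ℓ / L + 3) := by
          have h2 : (n + ℓ) / L ≤ n / L + ℓ / L + 1 := by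
            rw [Nat.add_div hL]; split <;> omega
          omega
        have hone : (1:ℝ) ≤ s ^ (n / L) := one_le_pow₀ hs1
        have hpow : s ^ ((n + ℓ) / L + 2) ≤ s ^ (n / L) * s ^ (ℓ / L + 3) := by
          rw [← pow_add]
          exact pow_le_pow_right₀ hs1 (by omega)
        have hL0 : (0:ℝ) ≤ (L:ℝ) := Nat.cast_nonneg _
        calc (Anqie.coverNum (Anqie.iterJoin σ 𝒰 n) : ℝ)
            ≤ (M + 1 : ℝ) + L * s ^ ((n + ℓ) / L + 2) := h1
        _ ≤ (M + 1 : ℝ) * s ^ (n / L) + (L * s ^ (ℓ / L + 3)) * s ^ (n / L) := by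
            have hM1 : (0:ℝ) ≤ (M:ℝ) + 1 := by positivity
            have t1 : (M + 1 : ℝ) ≤ (M + 1 : ℝ) * s ^ (n / L) := le_mul_of_one_le_right hM1 hone
            have t2 : (L:ℝ) * s ^ ((n + ℓ) / L + 2) ≤ (L * s ^ (ℓ / L + 3)) * s ^ (n / L) := by
              calc (L:ℝ) * s ^ ((n + ℓ) / L + 2) ≤ (L:ℝ) * (s ^ (n / L) * s ^ (ℓ / L + 3)) :=
                    mul_le_mul_of_nonneg_left hpow hL0
              _ = (L * s ^ (ℓ / L + 3)) * s ^ (n / L) := by ring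
            linarith
        _ = R * s ^ (n / L) := by rw [hR]; ring
      rcases Nat.eq_zero_or_pos (Anqie.coverNum (Anqie.iterJoin σ 𝒰 n)) with h0 | hpos
      · rw [h0]
        have hlR : (0:ℝ) ≤ Real.log R := Real.log_nonneg hR1
        have hcnn : (0:ℝ) ≤ c * n := by positivity
        simp only [Nat.cast_zero, Real.log_zero]
        linarith
      · have hpos' : (0:ℝ) < (Anqie.coverNum (Anqie.iterJoin σ 𝒰 n) : ℝ) := by
          exact_mod_cast hpos
        calc Real.log (Anqie.coverNum (Anqie.iterJoin σ 𝒰 n))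
            ≤ Real.log (R * s ^ (n / L)) := Real.log_le_log hpos' hBn
        _ = Real.log R + Real.log (s ^ (n / L)) :=
            Real.log_mul (ne_of_gt hRpos) (by positivity)
        _ = Real.log R + ((n / L : ℕ) : ℝ) * Real.log s := by rw [Real.log_pow]
        _ ≤ Real.log R + c * n := by
            have h3 : ((n / L : ℕ) : ℝ) * Real.log s ≤ ((n / L : ℕ) : ℝ) * (c * L) :=
              mul_le_mul_of_nonneg_left hlogs (Nat.cast_nonneg _)
            have h5 : ((n / L : ℕ) : ℝ) * (L:ℝ) ≤ (n:ℝ) := by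
              exact_mod_cast Nat.div_mul_le_self n L
            have h4 : ((n / L : ℕ) : ℝ) * (c * L) ≤ c * n := by nlinarith
            linarith
    -- limsup estimate
    have hev : ∀ᶠ n : ℕ in atTop,
        ((Real.log (Anqie.coverNum (Anqie.iterJoin σ 𝒰 n)) / n : ℝ) : EReal) ≤
        ((Real.log R / n + c : ℝ) : EReal) := by
      filter_upwards [Filter.eventually_ge_atTop 1] with n hn
      apply EReal.coe_le_coe_iff.2
      have hnpos : (0:ℝ) < (n:ℝ) := by exact_mod_cast hn
      calc Real.log (Anqie.coverNum (Anqie.iterJoin σ 𝒰 n)) / n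
          ≤ (Real.log R + c * n) / n := (div_le_div_iff_of_pos_right hnpos).2 (hkey n)
      _ = Real.log R / n + c := by field_simp
    have hlim : Filter.Tendsto (fun n : ℕ => ((Real.log R / n + c : ℝ) : EReal)) atTop
        (𝓝 ((c : ℝ) : EReal)) := by
      have h7 : Filter.Tendsto (fun n : ℕ => Real.log R / n + c) atTop (𝓝 (0 + c)) :=
        (tendsto_const_div_atTop_nhds_zero_nat _).add tendsto_const_nhds
      rw [zero_add] at h7
      exact (continuous_coe_real_ereal.tendsto _).comp h7
    calc Anqie.coverEntropy σ 𝒰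
        ≤ Filter.atTop.limsup (fun n : ℕ => ((Real.log R / n + c : ℝ) : EReal)) :=
          Filter.limsup_le_limsup hev
    _ = ((c : ℝ) : EReal) := hlim.limsup_eq
    _ = ((lam + δ : ℝ) : EReal) := by rw [hcdef]
  -- conclude by density
  by_contra hcon
  push_neg at hcon
  have hce : (lam : EReal) < Anqie.coverEntropy σ 𝒰 := hcon
  obtain ⟨x, hx1, hx2⟩ := EReal.exists_between_coe_real hce
  have hxlam : lam < x := by exact_mod_cast hx1
  have hδ : 0 < x - lam := by linarith
  have hmain := main (x - lam) hδ
  rw [show lam + (x - lam) = x by ring] at hmain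
  exact absurd (lt_of_lt_of_le hx2 hmain) (lt_irrefl _)

end AEProof

/-- Let `X` be a compact Hausdorff space and `f : ℕ → X` with
`AE(f) = λ`, `0 ≤ λ < +∞`. For `U ⊆ X` open and `K ⊆ U` closed, there is a set
`C ⊆ ℕ` with `f⁻¹(K) ⊆ C ⊆ f⁻¹(U)` whose characteristic function satisfies
`AE(χ_C) ≤ λ`. -/
theorem exists_zero_one_interpolation_low_entropy {X : Type*} [TopologicalSpace X]
    [CompactSpace X] [T2Space X] (f : ℕ → X) (lam : ℝ) (hlam : 0 ≤ lam)
    (hAE : Anqie.AE f = (lam : EReal)) (U K : Set X) (hU : IsOpen U) (hK : IsClosed K)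
    (hKU : K ⊆ U) :
    ∃ C : Set ℕ, f ⁻¹' K ⊆ C ∧ C ⊆ f ⁻¹' U ∧
      Anqie.AE (C.indicator fun _ => (1 : ℂ)) ≤ (lam : EReal) := by
  classical
  obtain ⟨t, hval, hcert⟩ := AEProof.exists_t f hU hK hKU hlam hAE
  refine ⟨{n | t n = true}, ?_, ?_, ?_⟩
  · intro n hn
    by_contra h
    have ht : t n = false := by
      simp only [Set.mem_setOf_eq] at h
      exact Bool.not_eq_true _ ▸ (by simpa using h)
    exact (hval n).2 ht hn
  · intro n hn
    exact (hval n).1 hn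
  · have heq : Set.indicator {n | t n = true} (fun _ => (1:ℂ)) =
        fun n => AEProof.boolC (t n) := by
      funext n
      by_cases h : t n = true
      · simp [Set.indicator, h, AEProof.boolC]
      · simp [Set.indicator, h, AEProof.boolC]
    rw [heq]
    exact AEProof.AE_le_of_cert t hlam hcert
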